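/- With intervals and the greedy sequence a₁,…,a_p as above (a₁ minimizes ℓ; a_{i+1} maximizes r over 𝒜ᵢ = { v : ℓ(aᵢ) < ℓ(v) < r(aᵢ) < r(v) }; the sequence stops when 𝒜ᵢ = ∅), if the interval graph is connected then a_p attains the maximum right endpoint: r(a_p) = max over v ∈ V of r(v). Consequently the union of the intervals I(a₁),…,I(a_p) covers the whole range [min_v ℓ(v), max_v r(v)]. -/
import Mathlib

private lemma walk_cross {V : Type*} {G : SimpleGraph V} (P : V → Prop) :
    ∀ {u v : V}, G.Walk u v → P u → ¬ P v → ∃ x y, G.Adj x y ∧ P x ∧ ¬ P y := by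
  intro u v w
  induction w with
  | nil => intro h h'; exact absurd h h'
  | @cons u b v h w ih =>
    intro hu hv
    by_cases hb : P b
    · exact ih hb hv
    · exact ⟨u, b, h, hu, hb⟩

/-- If the interval graph is connected, the last member of the greedy sequence of
farthest-reaching intervals attains the maximum right endpoint, and the intervals
of the sequence cover the whole range `[min ℓ, max r]`. -/
theorem stmt7 {V : Type*} [Fintype V] (l r : V → ℝ)
    (hlr : ∀ v, l v < r v)
    (hdist : ∀ v w : V, v ≠ w → l v ≠ l w ∧ r v ≠ r w ∧ l v ≠ r w)
    (H : SimpleGraph V)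
    (hH : ∀ v w : V, H.Adj v w ↔
      v ≠ w ∧ (Set.Icc (l v) (r v) ∩ Set.Icc (l w) (r w)).Nonempty)
    (hconn : H.Connected)
    (p : ℕ) (a : ℕ → V)
    (ha0 : ∀ v, l (a 0) ≤ l v)
    (hstep : ∀ i, i + 1 < p →
      (l (a i) < l (a (i + 1)) ∧ l (a (i + 1)) < r (a i) ∧ r (a i) < r (a (i + 1))) ∧
      (∀ v, l (a i) < l v → l v < r (a i) → r (a i) < r v → r v ≤ r (a (i + 1))))
    (hp : 1 ≤ p)
    (hstop : ∀ v, ¬ (l (a (p - 1)) < l v ∧ l v < r (a (p - 1)) ∧ r (a (p - 1)) < r v)) :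
    (∀ v, r v ≤ r (a (p - 1))) ∧
    (∀ x : ℝ, l (a 0) ≤ x → x ≤ r (a (p - 1)) →
      ∃ i < p, l (a i) ≤ x ∧ x ≤ r (a i)) := by
  classical
  -- monotonicity of right endpoints along the sequence
  have hmono : ∀ i j, i ≤ j → j < p → r (a i) ≤ r (a j) := by
    intro i j hij hjp
    induction j with
    | zero =>
      have : i = 0 := Nat.le_zero.mp hij
      simp [this]
    | succ j ih =>
      rcases Nat.lt_or_ge i (j + 1) with h | h
      · have h1 : r (a i) ≤ r (a j) :=
          ih (Nat.lt_succ_iff.mp h) (Nat.lt_of_succ_lt hjp)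
        exact h1.trans (le_of_lt (hstep j hjp).1.2.2)
      · have : i = j + 1 := le_antisymm hij h
        simp [this]
  have hpp : p - 1 < p := by omega
  have hRle : ∀ i, i < p → r (a i) ≤ r (a (p - 1)) := by
    intro i hi
    exact hmono i (p - 1) (by omega) hpp
  -- greatest index with left endpoint ≤ x
  have hgreat : ∀ x : ℝ, l (a 0) ≤ x →
      ∃ i, i < p ∧ l (a i) ≤ x ∧ ∀ j, j < p → l (a j) ≤ x → j ≤ i := by
    intro x hx
    set Q : ℕ → Prop := fun i => l (a i) ≤ x with hQ
    haveI : DecidablePred Q := fun _ => Classical.propDecidable _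
    refine ⟨Nat.findGreatest Q (p - 1), ?_, ?_, ?_⟩
    · have : Nat.findGreatest Q (p - 1) ≤ p - 1 := Nat.findGreatest_le (P := Q) (p - 1)
      omega
    · exact Nat.findGreatest_spec (P := Q) (n := p - 1) (Nat.zero_le _) hx
    · intro j hj hQj
      by_contra hlt
      exact Nat.findGreatest_is_greatest (P := Q) (n := p - 1) (k := j) (by omega) (by omega) hQj
  -- coverage
  have hcov : ∀ x : ℝ, l (a 0) ≤ x → x ≤ r (a (p - 1)) →
      ∃ i < p, l (a i) ≤ x ∧ x ≤ r (a i) := by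
    intro x hx hxR
    obtain ⟨i, hip, hli, hmax⟩ := hgreat x hx
    refine ⟨i, hip, hli, ?_⟩
    by_contra hxr
    push_neg at hxr
    rcases Nat.lt_or_ge (i + 1) p with h | h
    · have h1 : l (a (i + 1)) < r (a i) := (hstep i h).1.2.1
      have := hmax (i + 1) h (le_of_lt (h1.trans hxr))
      omega
    · have hi : i = p - 1 := by omega
      rw [hi] at hxr
      exact absurd hxR (not_le.mpr hxr)
  -- key claim: any interval starting before r (a (p-1)) ends before it too
  have hclaim : ∀ v, l v < r (a (p - 1)) → r v ≤ r (a (p - 1)) := by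
    intro v hv
    by_contra hrv
    push_neg at hrv
    obtain ⟨i, hip, hli, hmax⟩ := hgreat (l v) (ha0 v)
    by_cases hvi : v = a i
    · have := hRle i hip
      rw [← hvi] at this
      exact absurd this (not_le.mpr hrv)
    · have hne := hdist v (a i) hvi
      have hli' : l (a i) < l v := lt_of_le_of_ne hli hne.1.symm
      have hri : r (a i) < r v := lt_of_le_of_lt (hRle i hip) hrv
      have hlvr : l v < r (a i) := by
        rcases lt_trichotomy (l v) (r (a i)) with h | h | h
        · exact h
        · exact absurd h hne.2.2
        · rcases Nat.lt_or_ge (i + 1) p with h' | h'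
          · have h1 : l (a (i + 1)) < r (a i) := (hstep i h').1.2.1
            have := hmax (i + 1) h' (le_of_lt (h1.trans h))
            omega
          · have hi : i = p - 1 := by omega
            rw [hi] at h
            exact absurd hv (not_lt.mpr (le_of_lt h))
      rcases Nat.lt_or_ge (i + 1) p with h' | h'
      · have := (hstep i h').2 v hli' hlvr hri
        have := hRle (i + 1) h'
        linarith
      · have hi : i = p - 1 := by omega
        rw [hi] at hli' hlvr hri
        exact hstop v ⟨hli', hlvr, hri⟩
  -- part 1 via connectivity
  have part1 : ∀ v, r v ≤ r (a (p - 1)) := by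
    intro v
    by_contra hrv
    push_neg at hrv
    obtain ⟨w⟩ := hconn.preconnected (a (p - 1)) v
    obtain ⟨x, y, hxy, hx, hy⟩ :=
      walk_cross (fun u => r u ≤ r (a (p - 1))) w le_rfl (not_le.mpr hrv)
    push_neg at hy
    have hyne : y ≠ a (p - 1) := by
      intro h; rw [h] at hy; exact lt_irrefl _ hy
    have hly : r (a (p - 1)) < l y := by
      rcases lt_trichotomy (l y) (r (a (p - 1))) with h | h | h
      · exact absurd (hclaim y h) (not_le.mpr hy)
      · exact absurd h (hdist y (a (p - 1)) hyne).2.2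
      · exact h
    obtain ⟨-, z, hz⟩ := (hH x y).mp hxy
    obtain ⟨⟨_, hz1⟩, ⟨hz2, _⟩⟩ := hz
    linarith [hz1.trans hx]
  exact ⟨part1, hcov⟩
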